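/- For every quaternion matrix Q ∈ ℍ^{M×N} and for all m ∈ {0,…,M−1}, n ∈ {0,…,N−1}, one has IQDCT^R(FQDCT^R(Q))(m,n) = Q(m,n); that is, the right inverse quaternion discrete cosine transform inverts the right forward quaternion discrete cosine transform. -/

import Mathlib

open Matrix

/-- Normalization factor of the DCT: `α(u) = √(1/M)` if `u = 0`, `√(2/M)` otherwise. -/
noncomputable def dctAlpha (M : ℕ) (u : Fin M) : ℝ :=
  if (u : ℕ) = 0 then Real.sqrt (1 / M) else Real.sqrt (2 / M)

/-- DCT kernel `N(u,v,m,n) = cos(π(2m+1)u/(2M)) · cos(π(2n+1)v/(2N))`. -/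
noncomputable def dctKer (M N : ℕ) (u : Fin M) (v : Fin N) (m : Fin M) (n : Fin N) : ℝ :=
  Real.cos (Real.pi * (2 * (m : ℝ) + 1) * (u : ℝ) / (2 * (M : ℝ))) *
    Real.cos (Real.pi * (2 * (n : ℝ) + 1) * (v : ℝ) / (2 * (N : ℝ)))


lemma cos_sum_eq (M : ℕ) (hM : 0 < M) (k : ℤ) (hk : ¬ ((2 * (M:ℤ)) ∣ k)) :
    ∑ u : Fin M, Real.cos ((k : ℝ) * Real.pi * (u : ℝ) / M) =
      if Even k then 0 else 1 := by
  have hM0 : (M : ℝ) ≠ 0 := Nat.cast_ne_zero.mpr hM.ne'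
  set z : ℂ := Complex.exp (((k : ℝ) * Real.pi / M : ℝ) * Complex.I) with hz
  have hzu : ∀ u : ℕ, (z ^ u).re = Real.cos ((k : ℝ) * Real.pi * u / M) := by
    intro u
    rw [hz, ← Complex.exp_nat_mul]
    have h1 : (u : ℂ) * ((((k : ℝ) * Real.pi / M : ℝ)) * Complex.I)
        = ((((k:ℝ) * Real.pi * u / M) : ℝ) : ℂ) * Complex.I := by
      push_cast; ring
    rw [h1, Complex.exp_ofReal_mul_I_re]
  have hz1 : z ≠ 1 := by
    intro h
    rw [hz, Complex.exp_eq_one_iff] at h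
    obtain ⟨t, ht⟩ := h
    apply hk
    refine ⟨t, ?_⟩
    have h2 : ((((k:ℝ) * Real.pi / M) : ℝ) : ℂ) = (((t * (2 * Real.pi) : ℝ)) : ℂ) := by
      refine mul_right_cancel₀ Complex.I_ne_zero ?_
      rw [ht]; push_cast; ring
    have h3 : (k:ℝ) * Real.pi / M = t * (2 * Real.pi) := by exact_mod_cast h2
    have h4 : (k : ℝ) = 2 * M * t := by
      field_simp at h3
      nlinarith [Real.pi_pos]
    exact_mod_cast h4
  have hgeom : ∑ u : Fin M, z ^ (u : ℕ) = (z ^ M - 1) / (z - 1) := by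
    rw [Fin.sum_univ_eq_sum_range]
    exact geom_sum_eq hz1 M
  have hzM : z ^ M = (-1 : ℂ) ^ k := by
    rw [hz, ← Complex.exp_nat_mul]
    have h1 : (M : ℂ) * ((((k : ℝ) * Real.pi / M : ℝ)) * Complex.I) = k * (Real.pi * Complex.I) := by
      have hMc : (M : ℂ) ≠ 0 := by exact_mod_cast hM0
      push_cast
      field_simp
    rw [h1, Complex.exp_int_mul, Complex.exp_pi_mul_I]
  have habs : ‖z‖ = 1 := by
    rw [hz, Complex.norm_exp_ofReal_mul_I]
  have hsum : ∑ u : Fin M, Real.cos ((k : ℝ) * Real.pi * (u:ℝ) / M)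
      = ((z ^ M - 1) / (z - 1)).re := by
    rw [← hgeom, Complex.re_sum]
    exact Finset.sum_congr rfl fun u _ => (hzu u).symm
  rw [hsum, hzM]
  rcases Int.even_or_odd k with he | ho
  · rw [if_pos he, he.neg_one_zpow]
    simp
  · rw [if_neg (Int.not_even_iff_odd.mpr ho), ho.neg_one_zpow]
    have hnsz : Complex.normSq z = 1 := by
      rw [Complex.normSq_eq_norm_sq, habs]; norm_num
    have hre : z.re ≠ 1 := by
      intro h
      apply hz1
      have him : z.im = 0 := by
        rw [Complex.normSq_apply, h] at hnsz
        nlinarith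
      exact Complex.ext h him
    have hns : Complex.normSq (z - 1) = 2 - 2 * z.re := by
      rw [Complex.normSq_apply] at hnsz ⊢
      simp only [Complex.sub_re, Complex.sub_im, Complex.one_re, Complex.one_im]
      nlinarith
    have hd : (2 : ℝ) - 2 * z.re ≠ 0 := by
      intro h
      apply hre
      linarith
    rw [Complex.div_re, hns]
    simp only [Complex.sub_re, Complex.sub_im, Complex.one_re, Complex.one_im,
      Complex.neg_re, Complex.neg_im]
    norm_num
    field_simp
    ring

lemma cos_sum_odd (M : ℕ) (hM : 0 < M) (k : ℤ) (hk : Odd k) :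
    ∑ u : Fin M, Real.cos ((k : ℝ) * Real.pi * (u : ℝ) / M) = 1 := by
  rw [cos_sum_eq M hM k]
  · simp [Int.not_even_iff_odd.mpr hk]
  · intro ⟨t, ht⟩
    exact (Int.not_even_iff_odd.mpr hk) ⟨M * t, by linarith⟩

lemma dct_orth (M : ℕ) (hM : 0 < M) (m m' : Fin M) :
    ∑ u : Fin M, (dctAlpha M u)^2 *
      (Real.cos (Real.pi * (2*(m:ℝ)+1) * (u:ℝ) / (2*M)) *
       Real.cos (Real.pi * (2*(m':ℝ)+1) * (u:ℝ) / (2*M)))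
    = if m = m' then 1 else 0 := by
  have hM0 : (M : ℝ) ≠ 0 := Nat.cast_ne_zero.mpr hM.ne'
  set a : ℤ := (m : ℤ) - (m' : ℤ) with ha
  set b : ℤ := (m : ℤ) + (m' : ℤ) + 1 with hb
  set c : Fin M → ℝ := fun u =>
    (Real.cos ((a : ℝ) * Real.pi * (u:ℝ) / M) + Real.cos ((b : ℝ) * Real.pi * (u:ℝ) / M)) / 2
    with hc
  have hprod : ∀ u : Fin M,
      Real.cos (Real.pi * (2*(m:ℝ)+1) * (u:ℝ) / (2*M)) *
        Real.cos (Real.pi * (2*(m':ℝ)+1) * (u:ℝ) / (2*M)) = c u := by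
    intro u
    have key : ∀ x y : ℝ, Real.cos x * Real.cos y
        = (Real.cos (x - y) + Real.cos (x + y)) / 2 := by
      intro x y; rw [Real.cos_sub, Real.cos_add]; ring
    rw [key, hc]
    have h1 : Real.pi * (2*(m:ℝ)+1) * (u:ℝ) / (2*M) - Real.pi * (2*(m':ℝ)+1) * (u:ℝ) / (2*M)
        = (a : ℝ) * Real.pi * (u:ℝ) / M := by
      rw [ha]; push_cast; field_simp; ring
    have h2 : Real.pi * (2*(m:ℝ)+1) * (u:ℝ) / (2*M) + Real.pi * (2*(m':ℝ)+1) * (u:ℝ) / (2*M)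
        = (b : ℝ) * Real.pi * (u:ℝ) / M := by
      rw [hb]; push_cast; field_simp; ring
    rw [h1, h2]
  have halpha : ∀ u : Fin M, (dctAlpha M u)^2
      = 2 / (M:ℝ) - (if (u:ℕ) = 0 then (1:ℝ) / M else 0) := by
    intro u
    rw [dctAlpha]
    by_cases h : (u:ℕ) = 0
    · rw [if_pos h, if_pos h, Real.sq_sqrt (by positivity)]
      ring
    · rw [if_neg h, if_neg h, Real.sq_sqrt (by positivity)]
      ring
  have hz : (⟨0, hM⟩ : Fin M) ∈ Finset.univ := Finset.mem_univ _
  have hc0 : c ⟨0, hM⟩ = 1 := by simp [hc]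
  have hSa := cos_sum_eq M hM a
  have hSb := cos_sum_eq M hM b
  calc ∑ u : Fin M, (dctAlpha M u)^2 *
      (Real.cos (Real.pi * (2*(m:ℝ)+1) * (u:ℝ) / (2*M)) *
       Real.cos (Real.pi * (2*(m':ℝ)+1) * (u:ℝ) / (2*M)))
      = ∑ u : Fin M, ((2/(M:ℝ)) * c u - (if u = ⟨0, hM⟩ then (1/(M:ℝ)) * c u else 0)) := by
        refine Finset.sum_congr rfl fun u _ => ?_
        rw [hprod, halpha]
        by_cases h : (u:ℕ) = 0
        · have hu : u = ⟨0, hM⟩ := Fin.ext h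
          rw [if_pos h, if_pos hu]; ring
        · have hu : u ≠ ⟨0, hM⟩ := fun e => h (by rw [e])
          rw [if_neg h, if_neg hu]; ring
    _ = (∑ u : Fin M, (2/(M:ℝ)) * c u) - (1/(M:ℝ)) := by
        rw [Finset.sum_sub_distrib, Finset.sum_ite_eq' Finset.univ (⟨0, hM⟩ : Fin M), if_pos hz,
          hc0, mul_one]
    _ = (1/(M:ℝ)) * ((∑ u : Fin M, Real.cos ((a : ℝ) * Real.pi * (u:ℝ) / M))
          + (∑ u : Fin M, Real.cos ((b : ℝ) * Real.pi * (u:ℝ) / M))) - (1/(M:ℝ)) := by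
        congr 1
        have step : ∀ u : Fin M, (2/(M:ℝ)) * c u
            = (1/(M:ℝ)) * Real.cos ((a : ℝ) * Real.pi * (u:ℝ) / M)
              + (1/(M:ℝ)) * Real.cos ((b : ℝ) * Real.pi * (u:ℝ) / M) := by
          intro u; rw [hc]; ring
        rw [Finset.sum_congr rfl (fun u _ => step u), Finset.sum_add_distrib,
          ← Finset.mul_sum, ← Finset.mul_sum]
        ring
    _ = if m = m' then 1 else 0 := by
        have hmlt : (m : ℤ) < M := by exact_mod_cast m.isLt
        have hm'lt : (m' : ℤ) < M := by exact_mod_cast m'.isLt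
        have hmge : (0:ℤ) ≤ (m : ℤ) := Int.ofNat_nonneg _
        have hm'ge : (0:ℤ) ≤ (m' : ℤ) := Int.ofNat_nonneg _
        by_cases hmm' : m = m'
        · rw [if_pos hmm']
          have haz : a = 0 := by rw [ha, hmm']; ring
          have hSa' : ∑ u : Fin M, Real.cos ((a : ℝ) * Real.pi * (u:ℝ) / M) = M := by
            simp [haz]
          have hbodd : Odd b := ⟨(m:ℤ), by rw [hb, hmm']; ring⟩
          have hSb' : ∑ u : Fin M, Real.cos ((b : ℝ) * Real.pi * (u:ℝ) / M) = 1 :=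
            cos_sum_odd M hM b hbodd
          rw [hSa', hSb']
          field_simp
          ring
        · rw [if_neg hmm']
          have haz : a ≠ 0 := by
            intro h
            apply hmm'
            have h2 : (m : ℤ) = (m' : ℤ) := by omega
            exact Fin.ext (by exact_mod_cast h2)
          have hnda : ¬ ((2 * (M:ℤ)) ∣ a) := by
            intro hd
            have := Int.le_of_dvd (abs_pos.mpr haz) ((dvd_abs _ _).mpr hd)
            have hab : |a| < M := abs_lt.mpr ⟨by omega, by omega⟩
            omega
          have hbz : b ≠ 0 := by omega
          have hndb : ¬ ((2 * (M:ℤ)) ∣ b) := by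
            intro hd
            have := Int.le_of_dvd (abs_pos.mpr hbz) ((dvd_abs _ _).mpr hd)
            have hab : |b| < 2*M := abs_lt.mpr ⟨by omega, by omega⟩
            omega
          rcases Int.even_or_odd a with he | ho
          · have hSa' := (cos_sum_eq M hM a hnda).trans (if_pos he)
            have hbodd : Odd b := by
              obtain ⟨t, ht⟩ := he
              exact ⟨t + (m':ℤ), by omega⟩
            have hSb' := cos_sum_odd M hM b hbodd
            rw [hSa', hSb']
            ring
          · have hSa' := cos_sum_odd M hM a ho
            have hbeven : Even b := by
              obtain ⟨t, ht⟩ := ho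
              exact ⟨t + (m':ℤ) + 1, by omega⟩
            have hSb' := (cos_sum_eq M hM b hndb).trans (if_pos hbeven)
            rw [hSa', hSb']
            ring

/-- Right forward quaternion discrete cosine transform:
`FQDCT^R(Q)(u,v) = α(u)β(v) Σ_m Σ_n Q(m,n) · N(u,v,m,n) · q̇`. -/
noncomputable def FQDCTR (M N : ℕ) (q : Quaternion ℝ)
    (Q : Matrix (Fin M) (Fin N) (Quaternion ℝ)) :
    Matrix (Fin M) (Fin N) (Quaternion ℝ) :=
  Matrix.of fun u v =>
    (dctAlpha M u * dctAlpha N v) •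
      ∑ m : Fin M, ∑ n : Fin N, (dctKer M N u v m n) • (Q m n * q)

/-- Right inverse quaternion discrete cosine transform:
`IQDCT^R(C)(m,n) = Σ_u Σ_v α(u)β(v) · C(u,v) · N(u,v,m,n) · q̇⁻¹` with `q̇⁻¹ = −q̇`. -/
noncomputable def IQDCTR (M N : ℕ) (q : Quaternion ℝ)
    (C : Matrix (Fin M) (Fin N) (Quaternion ℝ)) :
    Matrix (Fin M) (Fin N) (Quaternion ℝ) :=
  Matrix.of fun m n =>
    ∑ u : Fin M, ∑ v : Fin N,
      (dctAlpha M u * dctAlpha N v) • ((dctKer M N u v m n) • (C u v * (-q)))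

/-- The right inverse quaternion discrete cosine transform inverts the right
forward quaternion discrete cosine transform. -/
theorem iqdctR_fqdctR (M N : ℕ) (hM : 1 ≤ M) (hN : 1 ≤ N)
    (q : Quaternion ℝ) (hre : q.re = 0) (hq : q ^ 2 = -1)
    (Q : Matrix (Fin M) (Fin N) (Quaternion ℝ)) (m : Fin M) (n : Fin N) :
    IQDCTR M N q (FQDCTR M N q Q) m n = Q m n := by
  have hq1 : q * (-q) = 1 := by
    have h2 : q * q = -1 := by rw [← sq]; exact hq
    rw [mul_neg, h2, neg_neg]
  simp only [IQDCTR, FQDCTR, Matrix.of_apply]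
  set F : Fin M → Fin N → Fin M → Fin N → ℝ := fun u v m' n' =>
    (dctAlpha M u * dctAlpha N v) *
      (dctKer M N u v m n * ((dctAlpha M u * dctAlpha N v) * dctKer M N u v m' n')) with hF
  have step1 : ∀ (u : Fin M) (v : Fin N),
      (dctAlpha M u * dctAlpha N v) • ((dctKer M N u v m n) •
        (((dctAlpha M u * dctAlpha N v) •
          ∑ m' : Fin M, ∑ n' : Fin N, (dctKer M N u v m' n') • (Q m' n' * q)) * (-q)))
      = ∑ m' : Fin M, ∑ n' : Fin N, F u v m' n' • Q m' n' := by
    intro u v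
    simp only [smul_mul_assoc, Finset.sum_mul, mul_assoc, hq1, mul_one,
      Finset.smul_sum, smul_smul]
    refine Finset.sum_congr rfl fun m' _ => Finset.sum_congr rfl fun n' _ => ?_
    congr 1
    rw [hF]
    ring
  calc ∑ u : Fin M, ∑ v : Fin N,
      (dctAlpha M u * dctAlpha N v) • ((dctKer M N u v m n) •
        (((dctAlpha M u * dctAlpha N v) •
          ∑ m' : Fin M, ∑ n' : Fin N, (dctKer M N u v m' n') • (Q m' n' * q)) * (-q)))
      = ∑ u : Fin M, ∑ v : Fin N, ∑ m' : Fin M, ∑ n' : Fin N, F u v m' n' • Q m' n' := by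
        exact Finset.sum_congr rfl fun u _ => Finset.sum_congr rfl fun v _ => step1 u v
    _ = ∑ m' : Fin M, ∑ n' : Fin N, ∑ u : Fin M, ∑ v : Fin N, F u v m' n' • Q m' n' := by
        rw [show (∑ u : Fin M, ∑ v : Fin N, ∑ m' : Fin M, ∑ n' : Fin N, F u v m' n' • Q m' n')
            = ∑ u : Fin M, ∑ m' : Fin M, ∑ v : Fin N, ∑ n' : Fin N, F u v m' n' • Q m' n'
          from Finset.sum_congr rfl fun u _ => Finset.sum_comm]
        rw [Finset.sum_comm]
        refine Finset.sum_congr rfl fun m' _ => ?_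
        rw [show (∑ u : Fin M, ∑ v : Fin N, ∑ n' : Fin N, F u v m' n' • Q m' n')
            = ∑ u : Fin M, ∑ n' : Fin N, ∑ v : Fin N, F u v m' n' • Q m' n'
          from Finset.sum_congr rfl fun u _ => Finset.sum_comm]
        rw [Finset.sum_comm]
    _ = ∑ m' : Fin M, ∑ n' : Fin N,
          ((if m = m' then (1:ℝ) else 0) * (if n = n' then (1:ℝ) else 0)) • Q m' n' := by
        refine Finset.sum_congr rfl fun m' _ => Finset.sum_congr rfl fun n' _ => ?_
        simp_rw [← Finset.sum_smul]
        rw [show (∑ u : Fin M, ∑ v : Fin N, F u v m' n')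
            = (∑ u : Fin M, (dctAlpha M u)^2 *
                (Real.cos (Real.pi * (2*(m:ℝ)+1) * (u:ℝ) / (2*M)) *
                 Real.cos (Real.pi * (2*(m':ℝ)+1) * (u:ℝ) / (2*M)))) *
              (∑ v : Fin N, (dctAlpha N v)^2 *
                (Real.cos (Real.pi * (2*(n:ℝ)+1) * (v:ℝ) / (2*N)) *
                 Real.cos (Real.pi * (2*(n':ℝ)+1) * (v:ℝ) / (2*N)))) from ?_]
        · rw [dct_orth M hM m m', dct_orth N hN n n']
        · rw [Finset.sum_mul_sum]
          refine Finset.sum_congr rfl fun u _ => Finset.sum_congr rfl fun v _ => ?_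
          simp only [hF, dctKer]
          ring
    _ = Q m n := by
        simp [ite_mul, ite_smul, Finset.sum_ite_eq]
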